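/- Let 0 < r < 1, let G ⊆ ℂ be a bounded domain with r𝔻 ⊆ G ⊆ 𝔻, let n ≥ 2, and for ε > 0 set G^n_ε = { z ∈ Gⁿ : |z₁⋯z_n| < ε }. Fix x, y ∈ r𝔻 ∖ {0} and set X = (x,…,x,0), Y = (0,y,…,y) ∈ ℂⁿ. Then there exists ε₀ > 0 such that for all 0 < ε < ε₀, the Kobayashi pseudo-distance and the Lempert function are different at the pair (X, Y): k_{G^n_ε}(X,Y) < l_{G^n_ε}(X,Y). -/

import Mathlib

open scoped ENNReal BigOperators

/-- The inverse hyperbolic tangent, `arctanh t = (1/2) log ((1+t)/(1-t))`. -/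
noncomputable def arctanh (t : ℝ) : ℝ := (1 / 2) * Real.log ((1 + t) / (1 - t))

/-- The Poincaré distance on the unit disc:
`ρ(a,b) = arctanh (|a - b| / |1 - conj a * b|)`. -/
noncomputable def rho (a b : ℂ) : ℝ :=
  arctanh (‖a - b‖ / ‖1 - (starRingEnd ℂ) a * b‖)

/-- The open unit disc in `ℂ`. -/
def uDisc : Set ℂ := Metric.ball 0 1

/-- The domain `G^n_ε = { z ∈ Gⁿ : |z₁ ⋯ z_n| < ε }` inside `ℂⁿ`. -/
def polyDom (n : ℕ) (G : Set ℂ) (ε : ℝ) : Set (Fin n → ℂ) :=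
  { z | (∀ i, z i ∈ G) ∧ ‖∏ i, z i‖ < ε }

/-- The Carathéodory pseudo-distance of an open set `M ⊆ ℂⁿ`:
the supremum of `ρ (g x) (g y)` over holomorphic `g : M → 𝔻`. -/
noncomputable def cara {n : ℕ} (M : Set (Fin n → ℂ)) (x y : Fin n → ℂ) : ℝ :=
  sSup { d | ∃ g : (Fin n → ℂ) → ℂ,
    DifferentiableOn ℂ g M ∧ (∀ z ∈ M, g z ∈ uDisc) ∧ d = rho (g x) (g y) }

/-- The Lempert function of an open set `M ⊆ ℂⁿ`, with values in `[0,∞]`: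
the infimum of `ρ(a,b)` over holomorphic discs `f : 𝔻 → M` with `f a = x`, `f b = y`. -/
noncomputable def lempert {n : ℕ} (M : Set (Fin n → ℂ)) (x y : Fin n → ℂ) : ℝ≥0∞ :=
  sInf { d | ∃ (f : ℂ → Fin n → ℂ) (a b : ℂ),
    a ∈ uDisc ∧ b ∈ uDisc ∧ DifferentiableOn ℂ f uDisc ∧
    (∀ z ∈ uDisc, f z ∈ M) ∧ f a = x ∧ f b = y ∧ d = ENNReal.ofReal (rho a b) }

/-- The `m`-chain Kobayashi distance `k^{(m)}_M(x,y)` of an open set `M ⊆ ℂⁿ`,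
with values in `[0,∞]`: the infimum over chains `x = p₀, …, p_m = y` in `M`,
holomorphic discs `fᵢ : 𝔻 → M` and points `aᵢ, bᵢ ∈ 𝔻` with `fᵢ aᵢ = p_{i-1}`,
`fᵢ bᵢ = pᵢ`, of `∑ ρ(aᵢ, bᵢ)`. -/
noncomputable def kChain {n : ℕ} (M : Set (Fin n → ℂ)) (m : ℕ) (x y : Fin n → ℂ) : ℝ≥0∞ :=
  sInf { d | ∃ (p : Fin (m + 1) → Fin n → ℂ) (f : Fin m → ℂ → Fin n → ℂ)
      (a b : Fin m → ℂ),
    p 0 = x ∧ p (Fin.last m) = y ∧ (∀ i, p i ∈ M) ∧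
    (∀ i : Fin m, a i ∈ uDisc ∧ b i ∈ uDisc ∧
      DifferentiableOn ℂ (f i) uDisc ∧ (∀ z ∈ uDisc, f i z ∈ M) ∧
      f i (a i) = p i.castSucc ∧ f i (b i) = p i.succ) ∧
    d = ∑ i : Fin m, ENNReal.ofReal (rho (a i) (b i)) }

/-- The Kobayashi pseudo-distance `k_M = inf_{m ≥ 1} k^{(m)}_M`. -/
noncomputable def kobayashi {n : ℕ} (M : Set (Fin n → ℂ)) (x y : Fin n → ℂ) : ℝ≥0∞ :=
  ⨅ m : ℕ, kChain M (m + 1) x y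

/-- The point `X = (x, …, x, 0) ∈ ℂⁿ`. -/
def Xpt (n : ℕ) (x : ℂ) : Fin n → ℂ := fun i => if (i : ℕ) < n - 1 then x else 0

/-- The point `Y = (0, y, …, y) ∈ ℂⁿ`. -/
def Ypt (n : ℕ) (y : ℂ) : Fin n → ℂ := fun i => if (i : ℕ) = 0 then 0 else y

section Aux
open Metric

lemma arctanh_lt_arctanh {p q : ℝ} (hp : 0 ≤ p) (hpq : p < q) (hq : q < 1) :
    arctanh p < arctanh q := by
  unfold arctanh
  have h1 : (0:ℝ) < 1 - q := by linarith
  have h2 : (0:ℝ) < 1 - p := by linarith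
  have h3 : (0:ℝ) < (1+p)/(1-p) := by positivity
  have h4 : (1+p)/(1-p) < (1+q)/(1-q) := by
    rw [div_lt_div_iff₀ h2 h1]; nlinarith
  have := Real.log_lt_log h3 h4
  linarith

lemma arctanh_nonneg {p : ℝ} (hp : 0 ≤ p) (hp1 : p < 1) : 0 ≤ arctanh p := by
  unfold arctanh
  have h2 : (0:ℝ) < 1 - p := by linarith
  have : (1:ℝ) ≤ (1+p)/(1-p) := by rw [le_div_iff₀ h2]; linarith
  have := Real.log_nonneg this
  linarith

lemma arctanh_add {u v : ℝ} (hu0 : 0 ≤ u) (hu : u < 1) (hv0 : 0 ≤ v) (hv : v < 1) :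
    arctanh u + arctanh v = arctanh ((u + v) / (1 + u * v)) := by
  unfold arctanh
  have h1 : (0:ℝ) < 1 - u := by linarith
  have h2 : (0:ℝ) < 1 - v := by linarith
  have h3 : (0:ℝ) < 1 + u * v := by nlinarith
  have e1 : 1 + (u + v)/(1 + u*v) = (1+u)*(1+v)/(1+u*v) := by field_simp; ring
  have e2 : 1 - (u + v)/(1 + u*v) = (1-u)*(1-v)/(1+u*v) := by field_simp; ring
  rw [← mul_add, ← Real.log_mul (by positivity) (by positivity)]
  congr 2
  rw [e1, e2, div_div_div_cancel_right₀, div_mul_div_comm]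
  exact h3.ne'

lemma normSq_mobius (a b : ℂ) :
    Complex.normSq (1 - (starRingEnd ℂ) b * a) - Complex.normSq (a - b)
      = (1 - Complex.normSq a) * (1 - Complex.normSq b) := by
  simp [Complex.normSq_apply, Complex.mul_re, Complex.mul_im, Complex.sub_re, Complex.sub_im,
    Complex.one_re, Complex.one_im, Complex.conj_re, Complex.conj_im]
  ring

lemma abs_lt_one_of_mem_ball {a : ℂ} (ha : a ∈ ball (0:ℂ) 1) : ‖a‖ < 1 := by
  have := mem_ball_zero_iff.1 ha; exact this

lemma normSq_lt_one_of_mem_ball {a : ℂ} (ha : a ∈ ball (0:ℂ) 1) : Complex.normSq a < 1 := by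
  have h := abs_lt_one_of_mem_ball ha
  rw [← Complex.sq_norm]; nlinarith [norm_nonneg a]

lemma mobius_num_lt_den {a b : ℂ} (ha : a ∈ ball (0:ℂ) 1) (hb : b ∈ ball (0:ℂ) 1) :
    ‖a - b‖ < ‖1 - (starRingEnd ℂ) b * a‖ := by
  have ha1 := normSq_lt_one_of_mem_ball ha
  have hb1 := normSq_lt_one_of_mem_ball hb
  have key := normSq_mobius a b
  have h1 : ‖a-b‖ ^ 2 < ‖1 - (starRingEnd ℂ) b * a‖ ^ 2 := by
    rw [Complex.sq_norm, Complex.sq_norm]; nlinarith [Complex.normSq_nonneg a, Complex.normSq_nonneg b]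
  nlinarith [norm_nonneg (a-b), norm_nonneg (1 - (starRingEnd ℂ) b * a)]


lemma mobius_den_ne {b w : ℂ} (hw : w ∈ ball (0:ℂ) 1) (hb : b ∈ ball (0:ℂ) 1) :
    1 + (starRingEnd ℂ) b * w ≠ 0 := by
  intro h
  have h2 : ‖(starRingEnd ℂ) b * w‖ < 1 := by
    rw [norm_mul, Complex.norm_conj]
    calc ‖b‖ * ‖w‖ ≤ 1 * ‖w‖ := by
          gcongr; exact (abs_lt_one_of_mem_ball hb).le
      _ < 1 := by rw [one_mul]; exact abs_lt_one_of_mem_ball hw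
  have h3 : (starRingEnd ℂ) b * w = -1 := by linear_combination h
  rw [h3] at h2; simp at h2

lemma neg_mem_uball {b : ℂ} (hb : b ∈ ball (0:ℂ) 1) : -b ∈ ball (0:ℂ) 1 := by
  simpa using hb

lemma mobius_maps {b w : ℂ} (hw : w ∈ ball (0:ℂ) 1) (hb : b ∈ ball (0:ℂ) 1) :
    (w + b) / (1 + (starRingEnd ℂ) b * w) ∈ ball (0:ℂ) 1 := by
  have h := mobius_num_lt_den hw (neg_mem_uball hb)
  simp only [map_neg, sub_neg_eq_add, neg_mul] at h
  rw [mem_ball_zero_iff, norm_div]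
  rw [div_lt_one]
  · convert h using 2 <;> ring
  · have h0 := mobius_den_ne hw hb
    have := norm_nonneg (1 + (starRingEnd ℂ) b * w)
    rcases this.lt_or_eq with h'|h'
    · exact h'
    · exact absurd (norm_eq_zero.1 h'.symm) h0

lemma mobius_point {a b : ℂ} (ha : a ∈ ball (0:ℂ) 1) (hb : b ∈ ball (0:ℂ) 1) :
    ((a - b) / (1 - (starRingEnd ℂ) b * a) + b)
      / (1 + (starRingEnd ℂ) b * ((a - b) / (1 - (starRingEnd ℂ) b * a))) = a := by
  have hden : 1 - (starRingEnd ℂ) b * a ≠ 0 := by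
    have := mobius_den_ne (neg_mem_uball ha) hb
    intro h; apply this; rw [mul_neg]; linear_combination h
  have hden2 : 1 + (starRingEnd ℂ) b * ((a - b) / (1 - (starRingEnd ℂ) b * a)) ≠ 0 := by
    have hw : (a - b) / (1 - (starRingEnd ℂ) b * a) ∈ ball (0:ℂ) 1 := by
      rw [mem_ball_zero_iff, norm_div, div_lt_one]
      · exact mobius_num_lt_den ha hb
      · have := norm_nonneg (1 - (starRingEnd ℂ) b * a)
        rcases this.lt_or_eq with h'|h'
        · exact h'
        · exact absurd (norm_eq_zero.1 h'.symm) hden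
    exact mobius_den_ne hw hb
  have hbb : 1 - b * (starRingEnd ℂ) b ≠ 0 := by
    have := mobius_den_ne (neg_mem_uball hb) hb
    intro h; apply this; rw [mul_neg]; linear_combination h
  rw [div_eq_iff hden2, div_add' _ _ _ hden, div_eq_iff hden, mul_assoc, add_mul, one_mul,
    mul_assoc, div_mul_cancel₀ _ hden]
  ring

lemma arctanh_le_arctanh {p q : ℝ} (hp : 0 ≤ p) (hpq : p ≤ q) (hq : q < 1) :
    arctanh p ≤ arctanh q := by
  unfold arctanh
  have h1 : (0:ℝ) < 1 - q := by linarith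
  have h2 : (0:ℝ) < 1 - p := by linarith
  have h3 : (0:ℝ) < (1+p)/(1-p) := by positivity
  have h4 : (1+p)/(1-p) ≤ (1+q)/(1-q) := by
    rw [div_le_div_iff₀ h2 h1]; nlinarith
  have := Real.log_le_log h3 h4
  linarith

set_option maxHeartbeats 2000000 in
lemma disc_bound {n : ℕ} (hn : 2 ≤ n) {G : Set ℂ} (hG1 : G ⊆ ball (0:ℂ) 1)
    {ε : ℝ} (hε : 0 < ε) {x y : ℂ} (hx0 : x ≠ 0) (hy1 : ‖y‖ < 1) (hy0 : y ≠ 0)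
    {s ρ₂ T₁ : ℝ} {p : ℕ}
    (hs : s = ‖y‖ ^ (n-1) / 4)
    (hT₁0 : 0 ≤ T₁) (hT₁ρ₂ : T₁ < ρ₂) (hsρ₂ : s < ρ₂) (hρ₂1 : ρ₂ < 1)
    (hp : (T₁/ρ₂)^p < ‖x‖)
    (hεsmall : ε < ‖y‖ ^ (n-1) * ‖x‖ * (s/ρ₂)^p / 2)
    {f : ℂ → Fin n → ℂ} {a b : ℂ} (ha : a ∈ uDisc) (hb : b ∈ uDisc)
    (hdf : DifferentiableOn ℂ f uDisc) (hmaps : ∀ z ∈ uDisc, f z ∈ polyDom n G ε)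
    (hfa : f a = Xpt n x) (hfb : f b = Ypt n y) :
    arctanh T₁ ≤ rho a b := by
  haveI : NeZero n := ⟨by omega⟩
  by_contra hcon
  push_neg at hcon
  have ha' : a ∈ ball (0:ℂ) 1 := ha
  have hb' : b ∈ ball (0:ℂ) 1 := hb
  set D := 1 - (starRingEnd ℂ) b * a with hD
  have habs : ‖a - b‖ < ‖D‖ := mobius_num_lt_den ha' hb'
  have hDpos : 0 < ‖D‖ := lt_of_le_of_lt (norm_nonneg _) habs
  have hD0 : D ≠ 0 := fun h => by rw [h] at hDpos; simp at hDpos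
  set w₀ := (a - b) / D with hw₀
  set τ := ‖w₀‖ with hτ
  have hτ1 : τ < 1 := by rw [hτ, hw₀, norm_div, div_lt_one hDpos]; exact habs
  have hτ0 : 0 ≤ τ := norm_nonneg _
  have hrho : rho a b = arctanh τ := by
    rw [rho, hτ, hw₀, norm_div]
    congr 2
    rw [hD, ← Complex.norm_conj (1 - (starRingEnd ℂ) a * b), map_sub, map_one, map_mul,
      Complex.conj_conj]
    congr 1
    ring
  have hττ : τ < T₁ := by
    by_contra hle
    push_neg at hle
    have := arctanh_le_arctanh hT₁0 hle hτ1
    rw [hrho] at hcon; linarith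
  -- Möbius change of variables
  set ψ := fun w : ℂ => (w + b) / (1 + (starRingEnd ℂ) b * w) with hψ
  have hψmaps : ∀ w ∈ ball (0:ℂ) 1, ψ w ∈ ball (0:ℂ) 1 := fun w hw => mobius_maps hw hb'
  have hψdiff : DifferentiableOn ℂ ψ (ball (0:ℂ) 1) := by
    apply DifferentiableOn.div
    · exact (differentiable_id.add_const b).differentiableOn
    · exact (((differentiable_const ((starRingEnd ℂ) b)).mul differentiable_id).const_add
        1).differentiableOn
    · exact fun w hw => mobius_den_ne hw hb'
  have hψ0 : ψ 0 = b := by simp [hψ]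
  have hw₀mem : w₀ ∈ ball (0:ℂ) 1 := by
    rw [mem_ball_zero_iff]; exact hτ1
  have hψw₀ : ψ w₀ = a := mobius_point ha' hb'
  have huDisc : uDisc = ball (0:ℂ) 1 := rfl
  have hcomp : ∀ i : Fin n, DifferentiableOn ℂ (fun w => f (ψ w) i) (ball (0:ℂ) 1) := by
    intro i
    have h1 : DifferentiableOn ℂ (fun w => f (ψ w)) (ball (0:ℂ) 1) := by
      apply DifferentiableOn.comp (t := uDisc) hdf hψdiff
      intro w hw
      exact hψmaps w hw
    exact differentiableOn_pi.1 h1 i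
  set g := fun w => f (ψ w) 0 with hg
  set H := fun w => ∏ i ∈ Finset.univ.erase (0 : Fin n), f (ψ w) i with hHdef
  have hgdiff : DifferentiableOn ℂ g (ball (0:ℂ) 1) := hcomp 0
  have hHdiff : DifferentiableOn ℂ H (ball (0:ℂ) 1) :=
    DifferentiableOn.fun_finsetProd (fun i _ => hcomp i)
  have hmem : ∀ w ∈ ball (0:ℂ) 1,
      (∀ i, f (ψ w) i ∈ G) ∧ ‖∏ i, f (ψ w) i‖ < ε :=
    fun w hw => hmaps (ψ w) (hψmaps w hw)
  have habs1 : ∀ w ∈ ball (0:ℂ) 1, ∀ i, ‖f (ψ w) i‖ < 1 :=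
    fun w hw i => abs_lt_one_of_mem_ball (hG1 ((hmem w hw).1 i))
  have hgH : ∀ w ∈ ball (0:ℂ) 1, ‖g w * H w‖ < ε := by
    intro w hw
    have e : g w * H w = ∏ i, f (ψ w) i :=
      Finset.mul_prod_erase Finset.univ _ (Finset.mem_univ (0 : Fin n))
    rw [e]; exact (hmem w hw).2
  have hn1 : n - 1 < n := by omega
  set j : Fin n := ⟨n - 1, hn1⟩ with hj
  have hj0 : j ≠ 0 := by
    simp only [hj, Fin.ne_iff_vne]
    simp only [Fin.val_zero]
    omega
  have hjmem : j ∈ Finset.univ.erase (0 : Fin n) := Finset.mem_erase.2 ⟨hj0, Finset.mem_univ _⟩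
  have hH1 : ∀ w ∈ ball (0:ℂ) 1, ‖H w‖ < 1 := by
    intro w hw
    have e : ‖H w‖ = ∏ i ∈ Finset.univ.erase (0 : Fin n),
        ‖f (ψ w) i‖ := norm_prod _ _
    rw [e, ← Finset.mul_prod_erase _ _ hjmem]
    have h1 : ‖f (ψ w) j‖ < 1 := habs1 w hw j
    have h2 : ∏ i ∈ ((Finset.univ.erase (0 : Fin n)).erase j), ‖f (ψ w) i‖ ≤ 1 :=
      Finset.prod_le_one (fun i _ => norm_nonneg _) (fun i _ => (habs1 w hw i).le)
    calc ‖f (ψ w) j‖ * ∏ i ∈ ((Finset.univ.erase (0 : Fin n)).erase j),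
          ‖f (ψ w) i‖
        ≤ ‖f (ψ w) j‖ * 1 :=
          mul_le_mul_of_nonneg_left h2 (norm_nonneg _)
      _ < 1 := by rwa [mul_one]
  have hH0 : H 0 = y ^ (n - 1) := by
    rw [hHdef]
    simp only [hψ0, hfb]
    have e : ∀ i ∈ Finset.univ.erase (0 : Fin n), Ypt n y i = y := by
      intro i hi
      have h1 : i ≠ 0 := (Finset.mem_erase.1 hi).1
      have h2 : (i : ℕ) ≠ 0 := by
        intro h; apply h1; exact Fin.ext (by simpa using h)
      simp [Ypt, h2]
    rw [Finset.prod_congr rfl e, Finset.prod_const,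
      Finset.card_erase_of_mem (Finset.mem_univ _), Finset.card_univ, Fintype.card_fin]
  have hgw₀ : g w₀ = x := by
    rw [hg]
    simp only [hψw₀, hfa]
    have : ((0 : Fin n) : ℕ) < n - 1 := by simp; omega
    simp only [Xpt, this, if_true]
  -- constants
  set c := ‖y‖ ^ (n - 1) with hc
  have hyabs : 0 < ‖y‖ := norm_pos_iff.mpr hy0
  have hxabs : 0 < ‖x‖ := norm_pos_iff.mpr hx0
  have hc0 : 0 < c := pow_pos hyabs _
  have hc1 : c < 1 := pow_lt_one₀ (norm_nonneg _) hy1 (by omega)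
  have hs0 : 0 < s := by rw [hs]; positivity
  have hs1 : s < 1 := by rw [hs]; rw [hc] at hc1; linarith
  have hρ₂0 : 0 < ρ₂ := hs0.trans hsρ₂
  set γ := (y : ℂ) ^ (n - 1) with hγ
  have hγabs : ‖γ‖ = c := by rw [hγ, norm_pow, hc]
  have hγmem : γ ∈ ball (0:ℂ) 1 := by
    rw [mem_ball_zero_iff, hγabs]; exact hc1
  have hMden : ∀ w ∈ ball (0:ℂ) 1, 1 - (starRingEnd ℂ) γ * H w ≠ 0 := by
    intro w hw h
    have h2 : ‖(starRingEnd ℂ) γ * H w‖ < 1 := by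
      rw [norm_mul, Complex.norm_conj, hγabs]
      calc c * ‖H w‖ ≤ 1 * ‖H w‖ := by
            apply mul_le_mul_of_nonneg_right hc1.le (norm_nonneg _)
        _ < 1 := by rw [one_mul]; exact hH1 w hw
    have h1 : (starRingEnd ℂ) γ * H w = 1 := by linear_combination -h
    rw [h1] at h2; simp at h2
  set M := fun w => (γ - H w) / (1 - (starRingEnd ℂ) γ * H w) with hM
  have hMdiff : DifferentiableOn ℂ M (ball (0:ℂ) 1) :=
    DifferentiableOn.div ((differentiableOn_const γ).sub hHdiff)
      ((differentiableOn_const 1).sub ((differentiableOn_const _).mul hHdiff)) hMden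
  have hM0 : M 0 = 0 := by
    have hball : (0:ℂ) ∈ ball (0:ℂ) 1 := by simp
    simp only [hM]
    rw [hH0, sub_self, zero_div]
  have hMmaps : Set.MapsTo M (ball (0:ℂ) 1) (ball (0:ℂ) 1) := by
    intro w hw
    have hHw : H w ∈ ball (0:ℂ) 1 := by
      rw [mem_ball_zero_iff]; exact hH1 w hw
    have hlt := mobius_num_lt_den hHw hγmem
    rw [mem_ball_zero_iff]
    simp only [hM]
    rw [norm_div, div_lt_one (lt_of_le_of_lt (norm_nonneg _) hlt)]
    rw [show γ - H w = -(H w - γ) by ring, norm_neg]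
    exact hlt
  have hSch : ∀ w ∈ ball (0:ℂ) 1, ‖M w‖ ≤ ‖w‖ := by
    intro w hw
    exact Complex.norm_le_norm_of_mapsTo_ball hMdiff (hMmaps.mono_right ball_subset_closedBall)
      hM0 (by rwa [mem_ball_zero_iff] at hw)
  have hHlow : ∀ w : ℂ, ‖w‖ ≤ s → c / 2 ≤ ‖H w‖ := by
    intro w hws
    have hw1 : w ∈ ball (0:ℂ) 1 := by
      rw [mem_ball_zero_iff]; linarith
    have h1 : ‖M w‖ ≤ s := le_trans (hSch w hw1) hws
    have h2 : γ - H w = M w * (1 - (starRingEnd ℂ) γ * H w) :=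
      (div_mul_cancel₀ _ (hMden w hw1)).symm
    have h4 : ‖1 - (starRingEnd ℂ) γ * H w‖ ≤ 2 := by
      have h6 := norm_sub_le (1:ℂ) ((starRingEnd ℂ) γ * H w)
      simp only [norm_one] at h6
      have h7 : ‖(starRingEnd ℂ) γ * H w‖ ≤ 1 := by
        rw [norm_mul, Complex.norm_conj, hγabs]
        calc c * ‖H w‖ ≤ 1 * 1 :=
              mul_le_mul hc1.le (hH1 w hw1).le (norm_nonneg _) zero_le_one
          _ = 1 := by ring
      linarith
    have h3 : ‖γ - H w‖ ≤ s * 2 := by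
      rw [h2, norm_mul]
      exact mul_le_mul h1 h4 (norm_nonneg _) hs0.le
    have h5 : c - ‖H w‖ ≤ ‖γ - H w‖ := by
      have h6 := norm_sub_norm_le γ (H w)
      rw [hγabs] at h6
      exact h6
    rw [hs] at h3
    linarith
  -- two cases
  have hτρ₂ : τ < ρ₂ := hττ.trans hT₁ρ₂
  rcases le_or_gt τ s with hcase | hcase
  · -- w₀ in the small ball where |H| is large
    have h1 := hgH w₀ hw₀mem
    rw [norm_mul, hgw₀] at h1
    have h2 := hHlow w₀ hcase
    have hratio : (s / ρ₂) ^ p ≤ 1 :=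
      pow_le_one₀ (by positivity) (by rw [div_le_one hρ₂0]; exact hsρ₂.le)
    have h3 : ‖x‖ * (c / 2) ≤ ‖x‖ * ‖H w₀‖ :=
      mul_le_mul_of_nonneg_left h2 (norm_nonneg _)
    have h4 : c * ‖x‖ * (s / ρ₂) ^ p / 2 ≤ c * ‖x‖ / 2 := by
      have := mul_le_of_le_one_right (by positivity : (0:ℝ) ≤ c * ‖x‖) hratio
      linarith
    nlinarith
  · -- annulus argument via the maximum principle
    set U := ball (0:ℂ) ρ₂ ∩ (closedBall (0:ℂ) s)ᶜ with hU
    have hUsub : U ⊆ ball (0:ℂ) 1 := by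
      intro z hz
      have := hz.1
      rw [mem_ball_zero_iff] at this ⊢
      linarith
    have hUbdd : Bornology.IsBounded U :=
      (Metric.isBounded_ball (x := (0:ℂ)) (r := ρ₂)).subset Set.inter_subset_left
    have hclos : closure U ⊆ closedBall (0:ℂ) ρ₂ ∩ (ball (0:ℂ) s)ᶜ := by
      intro z hz
      have h1 := closure_inter_subset_inter_closure _ _ hz
      constructor
      · have := h1.1
        rwa [closure_ball (0:ℂ) (ne_of_gt hρ₂0)] at this
      · have := h1.2
        rwa [closure_compl, interior_closedBall (0:ℂ) (ne_of_gt hs0)] at this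
    have hAnn : ∀ z ∈ closedBall (0:ℂ) ρ₂ ∩ (ball (0:ℂ) s)ᶜ,
        z ≠ 0 ∧ ‖z‖ < 1 ∧ s ≤ ‖z‖ := by
      intro z hz
      have h1 : ‖z‖ ≤ ρ₂ := by
        have := hz.1
        rwa [mem_closedBall_zero_iff] at this
      have h2 : s ≤ ‖z‖ := by
        have := hz.2
        rw [Set.mem_compl_iff, mem_ball_zero_iff, not_lt] at this
        exact this
      refine ⟨?_, by linarith, h2⟩
      intro h
      rw [h] at h2
      simp at h2
      linarith
    set F := fun w : ℂ => g w / w ^ p with hF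
    have hFdc : DiffContOnCl ℂ F U := by
      constructor
      · apply DifferentiableOn.div (hgdiff.mono hUsub)
        · exact (differentiable_pow p).differentiableOn
        · intro z hz
          have := hAnn z ⟨ball_subset_closedBall hz.1, fun h => hz.2 (ball_subset_closedBall h)⟩
          exact pow_ne_zero _ this.1
      · apply ContinuousOn.div
        · apply (hgdiff.continuousOn).mono
          intro z hz
          have := (hAnn z (hclos hz)).2.1
          rwa [mem_ball_zero_iff]
        · exact (continuous_pow p).continuousOn
        · intro z hz
          exact pow_ne_zero _ (hAnn z (hclos hz)).1
    set C := max ((2 * ε / c) / s ^ p) (1 / ρ₂ ^ p) with hC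
    have hfront : ∀ z ∈ frontier U, ‖F z‖ ≤ C := by
      intro z hz
      have hz' : ‖z‖ = s ∨ ‖z‖ = ρ₂ := by
        have h1 := frontier_inter_subset (ball (0:ℂ) ρ₂) ((closedBall (0:ℂ) s)ᶜ) hz
        rcases h1 with h | h
        · right
          have := h.1
          rw [frontier_ball (0:ℂ) (ne_of_gt hρ₂0)] at this
          rwa [mem_sphere_zero_iff_norm] at this
        · left
          have := h.2
          rw [frontier_compl, frontier_closedBall (0:ℂ) (ne_of_gt hs0)] at this
          rwa [mem_sphere_zero_iff_norm] at this
      rcases hz' with h | h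
      · -- inner circle
        have hz1 : z ∈ ball (0:ℂ) 1 := by
          rw [mem_ball_zero_iff, h]; linarith
        have hHz := hHlow z (le_of_eq h)
        have hgz : ‖g z‖ ≤ 2 * ε / c := by
          have h1 := hgH z hz1
          rw [norm_mul] at h1
          have h2 : ‖g z‖ * (c / 2) ≤ ‖g z‖ * ‖H z‖ :=
            mul_le_mul_of_nonneg_left hHz (norm_nonneg _)
          rw [le_div_iff₀ hc0]
          nlinarith
        have hnorm : ‖F z‖ = ‖g z‖ / s ^ p := by
          simp only [hF]
          rw [norm_div, norm_pow, h]
        rw [hnorm, hC]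
        refine le_trans ?_ (le_max_left _ _)
        exact (div_le_div_iff_of_pos_right (pow_pos hs0 p)).mpr hgz
      · -- outer circle
        have hz1 : z ∈ ball (0:ℂ) 1 := by
          rw [mem_ball_zero_iff, h]; exact hρ₂1
        have hgz : ‖g z‖ ≤ 1 := (habs1 z hz1 0).le
        have hnorm : ‖F z‖ = ‖g z‖ / ρ₂ ^ p := by
          simp only [hF]
          rw [norm_div, norm_pow, h]
        rw [hnorm, hC]
        refine le_trans ?_ (le_max_right _ _)
        exact (div_le_div_iff_of_pos_right (pow_pos hρ₂0 p)).mpr hgz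
    have hw₀U : w₀ ∈ U := by
      constructor
      · rw [mem_ball_zero_iff]; exact hτρ₂
      · intro hmem2
        rw [mem_closedBall_zero_iff] at hmem2
        exact absurd hmem2 (not_le.2 hcase)
    have hmax := Complex.norm_le_of_forall_mem_frontier_norm_le hUbdd hFdc hfront
      (subset_closure hw₀U)
    have hτpos : 0 < τ := hs0.trans hcase
    have hFw₀ : ‖F w₀‖ = ‖x‖ / τ ^ p := by
      simp only [hF]
      rw [norm_div, norm_pow, hgw₀, ← hτ]
    rw [hFw₀, div_le_iff₀ (pow_pos hτpos p)] at hmax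
    have hA : (2 * ε / c) / s ^ p * τ ^ p < ‖x‖ := by
      have e1 : (2 * ε / c) / s ^ p * τ ^ p = (2 * ε / c) * (τ / s) ^ p := by
        rw [div_pow]; ring
      have e2 : (τ / s) ^ p ≤ (ρ₂ / s) ^ p := by
        exact pow_le_pow_left₀ (by positivity) ((div_le_div_iff_of_pos_right hs0).mpr hτρ₂.le) p
      have h2εc : 2 * ε / c < ‖x‖ * (s / ρ₂) ^ p := by
        rw [div_lt_iff₀ hc0]
        nlinarith
      have e3 : (s / ρ₂) ^ p * (ρ₂ / s) ^ p = 1 := by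
        rw [← mul_pow, div_mul_div_comm, show s * ρ₂ / (ρ₂ * s) = 1 by rw [mul_comm]; exact div_self (by positivity)]
        exact one_pow p
      calc (2 * ε / c) / s ^ p * τ ^ p = (2 * ε / c) * (τ / s) ^ p := e1
        _ ≤ (2 * ε / c) * (ρ₂ / s) ^ p :=
            mul_le_mul_of_nonneg_left e2 (by positivity)
        _ < (‖x‖ * (s / ρ₂) ^ p) * (ρ₂ / s) ^ p :=
            mul_lt_mul_of_pos_right h2εc (by positivity)
        _ = ‖x‖ := by rw [mul_assoc, e3, mul_one]
    have hB : (1 / ρ₂ ^ p) * τ ^ p < ‖x‖ := by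
      have e1 : (1 / ρ₂ ^ p) * τ ^ p = (τ / ρ₂) ^ p := by rw [div_pow]; ring
      rw [e1]
      calc (τ / ρ₂) ^ p ≤ (T₁ / ρ₂) ^ p := by
            exact pow_le_pow_left₀ (by positivity) ((div_le_div_iff_of_pos_right hρ₂0).mpr hττ.le) p
        _ < ‖x‖ := hp
    rcases max_choice ((2 * ε / c) / s ^ p) (1 / ρ₂ ^ p) with hmc | hmc
    · rw [hC, hmc] at hmax; linarith
    · rw [hC, hmc] at hmax; linarith

lemma rho_coe_zero {t : ℝ} (ht : 0 ≤ t) : rho (t : ℂ) 0 = arctanh t := by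
  rw [rho]
  congr 1
  simp [Complex.norm_real, Real.norm_eq_abs, abs_of_nonneg ht]

lemma rho_zero_coe {t : ℝ} (ht : 0 ≤ t) : rho 0 (t : ℂ) = arctanh t := by
  rw [rho]
  congr 1
  simp [Complex.norm_real, Real.norm_eq_abs, abs_of_nonneg ht]

lemma kobayashi_le {n : ℕ} (hn : 2 ≤ n) {G : Set ℂ} {r : ℝ} (hr0 : 0 < r)
    (hrG : Metric.ball (0:ℂ) r ⊆ G) {ε : ℝ} (hε : 0 < ε)
    {x y : ℂ} (hx : ‖x‖ < r) (hx0 : x ≠ 0) (hy : ‖y‖ < r) (hy0 : y ≠ 0) :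
    kobayashi (polyDom n G ε) (Xpt n x) (Ypt n y) ≤
      ENNReal.ofReal (arctanh (‖x‖ / r)) +
        ENNReal.ofReal (arctanh (‖y‖ / r)) := by
  haveI : NeZero n := ⟨by omega⟩
  have hxa : 0 < ‖x‖ := norm_pos_iff.mpr hx0
  have hya : 0 < ‖y‖ := norm_pos_iff.mpr hy0
  have h0G : (0 : ℂ) ∈ G := hrG (by simp [hr0])
  have hn1 : n - 1 < n := by omega
  set j : Fin n := ⟨n - 1, hn1⟩ with hj
  -- the two discs
  set f₀ : ℂ → Fin n → ℂ := fun t i =>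
    if (i : ℕ) < n - 1 then (x / (‖x‖ : ℂ)) * ((r : ℂ) * t) else 0 with hf₀
  set f₁ : ℂ → Fin n → ℂ := fun t i =>
    if (i : ℕ) = 0 then 0 else (y / (‖y‖ : ℂ)) * ((r : ℂ) * t) with hf₁
  have habsx : ‖x / (‖x‖ : ℂ)‖ = 1 := by
    rw [norm_div, Complex.norm_real, Real.norm_eq_abs, abs_of_nonneg (norm_nonneg x),
      div_self hxa.ne']
  have habsy : ‖y / (‖y‖ : ℂ)‖ = 1 := by
    rw [norm_div, Complex.norm_real, Real.norm_eq_abs, abs_of_nonneg (norm_nonneg y),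
      div_self hya.ne']
  have hmaps₀ : ∀ z ∈ uDisc, f₀ z ∈ polyDom n G ε := by
    intro z hz
    have hz1 : ‖z‖ < 1 := by
      rw [uDisc, mem_ball_zero_iff] at hz; exact hz
    constructor
    · intro i
      simp only [hf₀]
      by_cases hi : (i : ℕ) < n - 1
      · rw [if_pos hi]
        apply hrG
        rw [mem_ball_zero_iff, norm_mul, habsx, one_mul, norm_mul,
          Complex.norm_real, Real.norm_eq_abs, abs_of_nonneg hr0.le]
        calc r * ‖z‖ < r * 1 := by
              exact mul_lt_mul_of_pos_left hz1 hr0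
          _ = r := mul_one r
      · rw [if_neg hi]
        exact h0G
    · have hzero : f₀ z j = 0 := by
        simp only [hf₀]
        rw [if_neg]
        show ¬(n - 1 < n - 1)
        omega
      rw [Finset.prod_eq_zero (Finset.mem_univ j) hzero]
      simpa using hε
  have hmaps₁ : ∀ z ∈ uDisc, f₁ z ∈ polyDom n G ε := by
    intro z hz
    have hz1 : ‖z‖ < 1 := by
      rw [uDisc, mem_ball_zero_iff] at hz; exact hz
    constructor
    · intro i
      simp only [hf₁]
      by_cases hi : (i : ℕ) = 0
      · rw [if_pos hi]; exact h0G
      · rw [if_neg hi]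
        apply hrG
        rw [mem_ball_zero_iff, norm_mul, habsy, one_mul, norm_mul,
          Complex.norm_real, Real.norm_eq_abs, abs_of_nonneg hr0.le]
        calc r * ‖z‖ < r * 1 := mul_lt_mul_of_pos_left hz1 hr0
          _ = r := mul_one r
    · have hzero : f₁ z 0 = 0 := by
        simp only [hf₁]
        rw [if_pos]
        rfl
      rw [Finset.prod_eq_zero (Finset.mem_univ (0 : Fin n)) hzero]
      simpa using hε
  have hdiff₀ : DifferentiableOn ℂ f₀ uDisc := by
    apply differentiableOn_pi.2
    intro i
    simp only [hf₀]
    by_cases hi : (i : ℕ) < n - 1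
    · simp only [if_pos hi]
      exact (((differentiable_const _).mul ((differentiable_const _).mul
        differentiable_id)).differentiableOn)
    · simp only [if_neg hi]
      exact differentiableOn_const 0
  have hdiff₁ : DifferentiableOn ℂ f₁ uDisc := by
    apply differentiableOn_pi.2
    intro i
    simp only [hf₁]
    by_cases hi : (i : ℕ) = 0
    · simp only [if_pos hi]
      exact differentiableOn_const 0
    · simp only [if_neg hi]
      exact (((differentiable_const _).mul ((differentiable_const _).mul
        differentiable_id)).differentiableOn)
  -- evaluation facts
  have heval₀a : f₀ ((‖x‖ / r : ℝ) : ℂ) = Xpt n x := by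
    funext i
    simp only [hf₀, Xpt]
    by_cases hi : (i : ℕ) < n - 1
    · rw [if_pos hi, if_pos hi]
      push_cast
      field_simp
      rw [mul_comm ((‖x‖ : ℂ)) ((r : ℂ))]
      exact div_self
        (mul_ne_zero (Complex.ofReal_ne_zero.2 hr0.ne') (Complex.ofReal_ne_zero.2 hxa.ne'))
    · rw [if_neg hi, if_neg hi]
  have heval₀b : f₀ 0 = (fun _ => 0 : Fin n → ℂ) := by
    funext i
    simp only [hf₀]
    by_cases hi : (i : ℕ) < n - 1
    · rw [if_pos hi]; ring
    · rw [if_neg hi]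
  have heval₁a : f₁ 0 = (fun _ => 0 : Fin n → ℂ) := by
    funext i
    simp only [hf₁]
    by_cases hi : (i : ℕ) = 0
    · rw [if_pos hi]
    · rw [if_neg hi]; ring
  have heval₁b : f₁ ((‖y‖ / r : ℝ) : ℂ) = Ypt n y := by
    funext i
    simp only [hf₁, Ypt]
    by_cases hi : (i : ℕ) = 0
    · rw [if_pos hi, if_pos hi]
    · rw [if_neg hi, if_neg hi]
      push_cast
      field_simp
      rw [mul_comm ((‖y‖ : ℂ)) ((r : ℂ))]
      exact div_self
        (mul_ne_zero (Complex.ofReal_ne_zero.2 hr0.ne') (Complex.ofReal_ne_zero.2 hya.ne'))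
  -- membership of chain points
  have hXmem : Xpt n x ∈ polyDom n G ε := by
    constructor
    · intro i
      simp only [Xpt]
      by_cases hi : (i : ℕ) < n - 1
      · rw [if_pos hi]
        exact hrG (by rw [mem_ball_zero_iff]; exact hx)
      · rw [if_neg hi]; exact h0G
    · have hzero : Xpt n x j = 0 := by
        simp only [Xpt, hj]
        rw [if_neg]
        omega
      rw [Finset.prod_eq_zero (Finset.mem_univ j) hzero]
      simpa using hε
  have hYmem : Ypt n y ∈ polyDom n G ε := by
    constructor
    · intro i
      simp only [Ypt]
      by_cases hi : (i : ℕ) = 0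
      · rw [if_pos hi]; exact h0G
      · rw [if_neg hi]
        exact hrG (by rw [mem_ball_zero_iff]; exact hy)
    · have hzero : Ypt n y 0 = 0 := by simp [Ypt]
      rw [Finset.prod_eq_zero (Finset.mem_univ (0 : Fin n)) hzero]
      simpa using hε
  have h0mem : (fun _ => 0 : Fin n → ℂ) ∈ polyDom n G ε := by
    constructor
    · intro i; exact h0G
    · rw [Finset.prod_const, Finset.card_univ, Fintype.card_fin,
        zero_pow (by omega : n ≠ 0)]
      simpa using hε
  -- the chain bound
  have hchain : kChain (polyDom n G ε) 2 (Xpt n x) (Ypt n y) ≤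
      ENNReal.ofReal (arctanh (‖x‖ / r)) +
        ENNReal.ofReal (arctanh (‖y‖ / r)) := by
    apply sInf_le
    refine ⟨![Xpt n x, (fun _ => 0 : Fin n → ℂ), Ypt n y], ![f₀, f₁],
      ![((‖x‖ / r : ℝ) : ℂ), 0], ![0, ((‖y‖ / r : ℝ) : ℂ)], ?_, ?_, ?_, ?_, ?_⟩
    · rfl
    · rfl
    · intro i
      fin_cases i
      · exact hXmem
      · exact h0mem
      · exact hYmem
    · intro i
      have hxr1 : ‖((‖x‖ / r : ℝ) : ℂ)‖ < 1 := by
        rw [Complex.norm_real, Real.norm_eq_abs, abs_of_nonneg (by positivity)]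
        rw [div_lt_one hr0]
        exact hx
      have hyr1 : ‖((‖y‖ / r : ℝ) : ℂ)‖ < 1 := by
        rw [Complex.norm_real, Real.norm_eq_abs, abs_of_nonneg (by positivity)]
        rw [div_lt_one hr0]
        exact hy
      have h0d : (0 : ℂ) ∈ uDisc := by
        rw [uDisc, mem_ball_zero_iff]; simp
      fin_cases i
      · exact ⟨by rw [uDisc, mem_ball_zero_iff]; exact hxr1, h0d,
          hdiff₀, hmaps₀, heval₀a, heval₀b⟩
      · exact ⟨h0d, by rw [uDisc, mem_ball_zero_iff]; exact hyr1,
          hdiff₁, hmaps₁, heval₁a, heval₁b⟩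
    · rw [Fin.sum_univ_two]
      congr 1
      · congr 1
        simp only [Matrix.cons_val_zero]
        rw [rho_coe_zero (by positivity)]
      · congr 1
        simp only [Matrix.cons_val_one, Matrix.head_cons, Matrix.cons_val_zero]
        rw [rho_zero_coe (by positivity)]
  calc kobayashi (polyDom n G ε) (Xpt n x) (Ypt n y)
      ≤ kChain (polyDom n G ε) (1 + 1) (Xpt n x) (Ypt n y) := iInf_le _ 1
    _ ≤ _ := hchain

end Aux

/-- for all sufficiently small `ε > 0`,
`k_{G^n_ε}(X,Y) < l_{G^n_ε}(X,Y)`. -/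
theorem kobayashi_lt_lempert (r : ℝ) (hr0 : 0 < r) (hr1 : r < 1)
    (G : Set ℂ) (hGopen : IsOpen G) (hGconn : IsConnected G)
    (hGbdd : Bornology.IsBounded G)
    (hrG : Metric.ball (0 : ℂ) r ⊆ G) (hG1 : G ⊆ Metric.ball (0 : ℂ) 1)
    (n : ℕ) (hn : 2 ≤ n)
    (x y : ℂ) (hx : x ∈ Metric.ball (0 : ℂ) r) (hx0 : x ≠ 0)
    (hy : y ∈ Metric.ball (0 : ℂ) r) (hy0 : y ≠ 0) :
    ∃ ε₀ : ℝ, 0 < ε₀ ∧ ∀ ε : ℝ, 0 < ε → ε < ε₀ →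
      kobayashi (polyDom n G ε) (Xpt n x) (Ypt n y) <
        lempert (polyDom n G ε) (Xpt n x) (Ypt n y) := by
  classical
  have hx1 : ‖x‖ < r := by
    rw [mem_ball_zero_iff] at hx; exact hx
  have hy1 : ‖y‖ < r := by
    rw [mem_ball_zero_iff] at hy; exact hy
  have hxa : 0 < ‖x‖ := norm_pos_iff.mpr hx0
  have hya : 0 < ‖y‖ := norm_pos_iff.mpr hy0
  have hy1' : ‖y‖ < 1 := hy1.trans hr1
  set u := ‖x‖ / r with hu
  set v := ‖y‖ / r with hv
  have hu0 : 0 < u := by positivity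
  have hv0 : 0 < v := by positivity
  have hu1 : u < 1 := by rw [hu, div_lt_one hr0]; exact hx1
  have hv1 : v < 1 := by rw [hv, div_lt_one hr0]; exact hy1
  set T := (u + v) / (1 + u * v) with hT
  have hT0 : 0 < T := by positivity
  have hT1 : T < 1 := by
    rw [hT, div_lt_one (by nlinarith)]
    nlinarith
  set T₁ := (1 + T) / 2 with hT₁
  have hTT₁ : T < T₁ := by rw [hT₁]; linarith
  have hT₁1 : T₁ < 1 := by rw [hT₁]; linarith
  have hT₁0 : 0 ≤ T₁ := by rw [hT₁]; linarith
  set c := ‖y‖ ^ (n - 1) with hc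
  have hc0 : 0 < c := pow_pos hya _
  have hc1 : c < 1 := pow_lt_one₀ (norm_nonneg _) hy1' (by omega)
  set s := c / 4 with hs
  have hs0 : 0 < s := by rw [hs]; positivity
  have hs1 : s < 1 := by rw [hs]; linarith
  set ρ₂ := (1 + max T₁ s) / 2 with hρ₂
  have hmax1 : max T₁ s < 1 := max_lt hT₁1 hs1
  have hT₁ρ₂ : T₁ < ρ₂ := by
    have := le_max_left T₁ s
    rw [hρ₂]; linarith
  have hsρ₂ : s < ρ₂ := by
    have := le_max_right T₁ s
    rw [hρ₂]; linarith
  have hρ₂1 : ρ₂ < 1 := by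
    rw [hρ₂]; linarith
  have hρ₂0 : 0 < ρ₂ := hs0.trans hsρ₂
  have hrat1 : T₁ / ρ₂ < 1 := by rw [div_lt_one hρ₂0]; exact hT₁ρ₂
  obtain ⟨p, hp⟩ := exists_pow_lt_of_lt_one hxa hrat1
  refine ⟨c * ‖x‖ * (s / ρ₂) ^ p / 2, by positivity, ?_⟩
  intro ε hε hεε₀
  have hlow : ENNReal.ofReal (arctanh T₁) ≤
      lempert (polyDom n G ε) (Xpt n x) (Ypt n y) := by
    apply le_sInf
    rintro d ⟨f, a, b, ha, hb, hdf, hmaps, hfa, hfb, rfl⟩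
    apply ENNReal.ofReal_le_ofReal
    exact disc_bound hn hG1 hε hx0 hy1' hy0 (by rw [hs, hc])
      hT₁0 hT₁ρ₂ hsρ₂ hρ₂1 hp (by rw [← hc]; exact hεε₀) ha hb hdf hmaps hfa hfb
  have hkob := kobayashi_le hn hr0 hrG hε hx1 hx0 hy1 hy0
  have harc0 : 0 ≤ arctanh u := arctanh_nonneg hu0.le hu1
  have harc0' : 0 ≤ arctanh v := arctanh_nonneg hv0.le hv1
  have hstrict : arctanh T < arctanh T₁ := arctanh_lt_arctanh hT0.le hTT₁ hT₁1
  have harcT₁pos : 0 < arctanh T₁ := by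
    have h0 : arctanh 0 = 0 := by unfold arctanh; simp
    have := arctanh_lt_arctanh (le_refl 0) (hT0.trans hTT₁) hT₁1
    rwa [h0] at this
  calc kobayashi (polyDom n G ε) (Xpt n x) (Ypt n y)
      ≤ ENNReal.ofReal (arctanh u) + ENNReal.ofReal (arctanh v) := hkob
    _ = ENNReal.ofReal (arctanh u + arctanh v) := (ENNReal.ofReal_add harc0 harc0').symm
    _ = ENNReal.ofReal (arctanh T) := by
        rw [arctanh_add hu0.le hu1 hv0.le hv1, hT]
    _ < ENNReal.ofReal (arctanh T₁) := by
        rw [ENNReal.ofReal_lt_ofReal_iff harcT₁pos]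
        exact hstrict
    _ ≤ lempert (polyDom n G ε) (Xpt n x) (Ypt n y) := hlow
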